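/- (Good strict pivot when a ball around p lies in the hull) Let S = {v_1, ..., v_n} be a finite nonempty set of points in ℝ^m, p ∈ ℝ^m, and R = max{d(p, v_i) : i = 1, ..., n}. Suppose ρ > 0 and the closed Euclidean ball of radius ρ centered at p is contained in conv(S). Then for every p' ∈ conv(S) with p' ≠ p there exists v ∈ S such that (p' − p)ᵀ(v − p) ≤ 0 and the distance from p to the line through p' and v is at most d(p, p')/√(1 + ρ²/R²). -/

import Mathlib

private lemma good_pivot_aux (S ρ R : ℝ) (hS : 0 ≤ S) (hρ : 0 < ρ) (hR : 0 < R) :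
    S^2 * ρ^2 * (S + R)^2 ≤ (S^2 + ρ*S)^2 * (R^2 + ρ^2) := by
  nlinarith [sq_nonneg (S^2*R), sq_nonneg (S*ρ^2),
    mul_nonneg (mul_nonneg hρ.le (sq_nonneg (S*(R-ρ)))) hS,
    mul_nonneg (mul_nonneg hS (sq_nonneg (S*ρ))) hR.le]

set_option maxHeartbeats 1000000 in
/-- **Good strict pivot when a ball around `p` lies in the hull**. If the closed ball of
radius `ρ > 0` centered at `p` lies in `conv(S)` and `R = max d(p, v i)`, then every
`p' ∈ conv(S)`, `p' ≠ p`, admits a strict pivot `v` with the distance from `p` to the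
line through `p'` and `v` at most `d(p,p')/√(1 + ρ²/R²)`. -/
theorem good_strict_pivot_of_ball {m n : ℕ} (hn : 0 < n)
    (v : Fin n → EuclideanSpace ℝ (Fin m)) (p : EuclideanSpace ℝ (Fin m))
    (R : ℝ) (hR : IsGreatest (Set.range fun i => dist p (v i)) R)
    (ρ : ℝ) (hρ : 0 < ρ)
    (hball : Metric.closedBall p ρ ⊆ convexHull ℝ (Set.range v)) :
    ∀ p' ∈ convexHull ℝ (Set.range v), p' ≠ p →
      ∃ j : Fin n, inner ℝ (p' - p) (v j - p) ≤ (0 : ℝ) ∧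
        (⨅ t : ℝ, dist p ((1 - t) • p' + t • v j)) ≤
          dist p p' / Real.sqrt (1 + ρ ^ 2 / R ^ 2) := by
  intro p' hp' hne
  set a : EuclideanSpace ℝ (Fin m) := p' - p with ha
  have ha0 : a ≠ 0 := sub_ne_zero.mpr hne
  have hna : 0 < ‖a‖ := norm_pos_iff.mpr ha0
  have hhull : convexHull ℝ (Set.range v) ⊆ Metric.closedBall p R := by
    apply convexHull_min _ (convex_closedBall p R)
    rintro x ⟨i, rfl⟩
    simpa [Metric.mem_closedBall, dist_comm] using hR.2 ⟨i, rfl⟩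
  have hdq : dist (p - (ρ * ‖a‖⁻¹) • a) p = ρ := by
    rw [dist_eq_norm, sub_sub_cancel_left, norm_neg, norm_smul, Real.norm_eq_abs,
      abs_of_pos (mul_pos hρ (inv_pos.mpr hna)), mul_assoc, inv_mul_cancel₀ hna.ne', mul_one]
  have hq1 : p - (ρ * ‖a‖⁻¹) • a ∈ Metric.closedBall p ρ := Metric.mem_closedBall.mpr hdq.le
  have hρR : ρ ≤ R := by
    have h2 := Metric.mem_closedBall.mp (hhull (hball hq1))
    rwa [hdq] at h2
  have hRpos : 0 < R := lt_of_lt_of_le hρ hρR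
  have hq2 := hball hq1
  rw [convexHull_range_eq_exists_affineCombination] at hq2
  obtain ⟨s, w, hw0, hw1, hwq⟩ := hq2
  rw [Finset.affineCombination_eq_linear_combination _ _ _ hw1] at hwq
  have hsum : ∑ i ∈ s, w i * (inner ℝ a (v i - p) : ℝ) = -(ρ * ‖a‖) := by
    have h1 : (inner ℝ a ((p - (ρ * ‖a‖⁻¹) • a) - p) : ℝ) = -(ρ * ‖a‖) := by
      rw [sub_sub_cancel_left, inner_neg_right, real_inner_smul_right,
        real_inner_self_eq_norm_sq]
      field_simp
    have h2 : ∑ i ∈ s, w i • (v i - p) = (∑ i ∈ s, w i • v i) - p := by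
      simp only [smul_sub, Finset.sum_sub_distrib, ← Finset.sum_smul, hw1, one_smul]
    rw [← h1, ← hwq, ← h2, inner_sum]
    simp only [real_inner_smul_right]
  have hj : ∃ j, (inner ℝ a (v j - p) : ℝ) ≤ -(ρ * ‖a‖) := by
    by_contra h
    push_neg at h
    obtain ⟨j, hjs, hjw⟩ : ∃ j ∈ s, 0 < w j := by
      by_contra h2
      push_neg at h2
      have : ∑ i ∈ s, w i = 0 := Finset.sum_eq_zero fun i hi =>
        le_antisymm (h2 i hi) (hw0 i hi)
      rw [hw1] at this; norm_num at this
    have hlt : ∑ i ∈ s, w i * (-(ρ * ‖a‖)) < ∑ i ∈ s, w i * (inner ℝ a (v i - p) : ℝ) := by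
      apply Finset.sum_lt_sum
      · exact fun i hi => mul_le_mul_of_nonneg_left (h i).le (hw0 i hi)
      · exact ⟨j, hjs, (mul_lt_mul_iff_right₀ hjw).mpr (h j)⟩
    rw [hsum, ← Finset.sum_mul, hw1, one_mul] at hlt
    exact lt_irrefl _ hlt
  obtain ⟨j, hj⟩ := hj
  refine ⟨j, le_trans hj (by nlinarith [mul_pos hρ hna]), ?_⟩
  set b : EuclideanSpace ℝ (Fin m) := p' - v j with hb
  have hab : (‖a‖^2 + ρ * ‖a‖) ≤ (inner ℝ a b : ℝ) := by
    have hba : b = a - (v j - p) := by rw [hb, ha]; abel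
    rw [hba, inner_sub_right, real_inner_self_eq_norm_sq]
    nlinarith [hj]
  have hK : (0:ℝ) < inner ℝ a b :=
    lt_of_lt_of_le (by positivity : (0:ℝ) < ‖a‖^2 + ρ * ‖a‖) hab
  have hbpos : 0 < ‖b‖ := by
    rcases eq_or_lt_of_le (norm_nonneg b) with h | h
    · exfalso
      have : (inner ℝ a b : ℝ) = 0 := by
        rw [show b = 0 from norm_eq_zero.mp h.symm, inner_zero_right]
      linarith
    · exact h
  have hbR : ‖b‖ ≤ ‖a‖ + R := by
    have hvj : ‖v j - p‖ ≤ R := by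
      have h3 : dist p (v j) ≤ R := hR.2 ⟨j, rfl⟩
      rwa [dist_eq_norm, norm_sub_rev] at h3
    calc ‖b‖ = ‖a - (v j - p)‖ := by rw [hb, ha]; congr 1; abel
      _ ≤ ‖a‖ + ‖v j - p‖ := norm_sub_le _ _
      _ ≤ ‖a‖ + R := by linarith
  set t₀ : ℝ := (inner ℝ a b : ℝ) / ‖b‖^2 with ht₀
  have hbdd : BddBelow (Set.range fun t : ℝ => dist p ((1 - t) • p' + t • v j)) :=
    ⟨0, by rintro x ⟨t, rfl⟩; exact dist_nonneg⟩
  refine le_trans (ciInf_le hbdd t₀) ?_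
  have hx : (1 - t₀) • p' + t₀ • v j - p = a - t₀ • b := by
    rw [ha, hb]; module
  have hd2 : dist p ((1 - t₀) • p' + t₀ • v j) ^ 2
      = ‖a‖^2 - (inner ℝ a b : ℝ)^2 / ‖b‖^2 := by
    rw [dist_comm, dist_eq_norm, hx, norm_sub_sq_real, real_inner_smul_right,
      norm_smul, Real.norm_eq_abs, mul_pow, sq_abs, ht₀]
    field_simp
    ring
  have hden : (0:ℝ) < 1 + ρ^2 / R^2 := by positivity
  have hrhs : (dist p p' / Real.sqrt (1 + ρ ^ 2 / R ^ 2)) ^ 2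
      = ‖a‖^2 / (1 + ρ^2 / R^2) := by
    rw [div_pow, Real.sq_sqrt hden.le, dist_comm, dist_eq_norm, ← ha]
  have key : ‖a‖^2 - (inner ℝ a b : ℝ)^2 / ‖b‖^2 ≤ ‖a‖^2 / (1 + ρ^2 / R^2) := by
    have h1 : (‖a‖^2 + ρ*‖a‖)^2 ≤ (inner ℝ a b : ℝ)^2 :=
      pow_le_pow_left₀ (by positivity) hab 2
    have h2 : ‖b‖^2 ≤ (‖a‖+R)^2 := pow_le_pow_left₀ (norm_nonneg b) hbR 2
    have hineq : ‖a‖^2 * ρ^2 * (‖a‖ + R)^2 ≤ (‖a‖^2 + ρ*‖a‖)^2 * (R^2 + ρ^2) :=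
      good_pivot_aux ‖a‖ ρ R (norm_nonneg a) hρ hRpos
    have e1 : ‖a‖^2 * ρ^2 * ‖b‖^2 ≤ ‖a‖^2 * ρ^2 * (‖a‖ + R)^2 :=
      mul_le_mul_of_nonneg_left h2 (by positivity)
    have e3 : (‖a‖^2 + ρ*‖a‖)^2 * (R^2 + ρ^2) ≤ (inner ℝ a b : ℝ)^2 * (R^2 + ρ^2) :=
      mul_le_mul_of_nonneg_right h1 (by positivity)
    have hchain : ‖a‖^2 * ρ^2 * ‖b‖^2 ≤ (inner ℝ a b : ℝ)^2 * (R^2 + ρ^2) := by linarith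
    have hfrac : ‖a‖^2 * ρ^2 / (R^2 + ρ^2) ≤ (inner ℝ a b : ℝ)^2 / ‖b‖^2 := by
      rw [div_le_div_iff₀ (by positivity) (by positivity)]
      linarith
    have heq : ‖a‖^2 / (1 + ρ^2 / R^2) = ‖a‖^2 - ‖a‖^2 * ρ^2 / (R^2 + ρ^2) := by
      field_simp
      ring
    rw [heq]
    linarith
  have h1 : dist p ((1 - t₀) • p' + t₀ • v j) ^ 2
      ≤ (dist p p' / Real.sqrt (1 + ρ ^ 2 / R ^ 2)) ^ 2 := by
    rw [hd2, hrhs]; exact key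
  have h2 : 0 ≤ dist p p' / Real.sqrt (1 + ρ ^ 2 / R ^ 2) := by positivity
  calc dist p ((1 - t₀) • p' + t₀ • v j)
      = Real.sqrt (dist p ((1 - t₀) • p' + t₀ • v j) ^ 2) :=
        (Real.sqrt_sq dist_nonneg).symm
    _ ≤ Real.sqrt ((dist p p' / Real.sqrt (1 + ρ ^ 2 / R ^ 2)) ^ 2) :=
        Real.sqrt_le_sqrt h1
    _ = dist p p' / Real.sqrt (1 + ρ ^ 2 / R ^ 2) := Real.sqrt_sq h2
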